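/- Let μ be a compactly supported Borel probability measure on ℝ^ν and P ⊂ ℝ^ν a set such that {e_λ : λ ∈ P} is orthonormal in L²(μ). Then {e_λ : λ ∈ P} is an orthonormal basis for L²(μ) if and only if Q(t) := Σ_{λ∈P} |μ̂(t−λ)|² equals 1 for all t ∈ ℝ^ν. -/

import Mathlib

open MeasureTheory RealInnerProductSpace

/-- Fourier transform `μ̂(t) = ∫ e^{2πi t·x} dμ(x)` of a measure on `ℝ^ν`. -/
noncomputable def muHat {ν : ℕ} (μ : Measure (EuclideanSpace ℝ (Fin ν)))
    (t : EuclideanSpace ℝ (Fin ν)) : ℂ :=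
  ∫ x, Complex.exp ((((2 : ℝ) * Real.pi * ⟪t, x⟫ : ℝ) : ℂ) * Complex.I) ∂μ

namespace QProof

variable {ν : ℕ}

noncomputable def eF (t x : EuclideanSpace ℝ (Fin ν)) : ℂ :=
  Complex.exp ((((2 : ℝ) * Real.pi * ⟪t, x⟫ : ℝ) : ℂ) * Complex.I)

lemma eF_norm (t x : EuclideanSpace ℝ (Fin ν)) : ‖eF t x‖ = 1 :=
  Complex.norm_exp_ofReal_mul_I _

lemma eF_continuous (t : EuclideanSpace ℝ (Fin ν)) : Continuous (eF t) := by
  exact Complex.continuous_exp.comp <| (Complex.continuous_ofReal.comp <|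
    (continuous_const.mul ((innerSL ℝ t).continuous))).mul continuous_const

lemma eF_zero (x : EuclideanSpace ℝ (Fin ν)) : eF 0 x = 1 := by
  simp [eF]

lemma eF_mul (t s x : EuclideanSpace ℝ (Fin ν)) : eF t x * eF s x = eF (t + s) x := by
  rw [eF, eF, eF, ← Complex.exp_add]
  congr 1
  rw [inner_add_left]
  push_cast
  ring

lemma eF_conj (t x : EuclideanSpace ℝ (Fin ν)) :
    (starRingEnd ℂ) (eF t x) = eF (-t) x := by
  rw [eF, eF, ← Complex.exp_conj]
  congr 1
  rw [inner_neg_left, map_mul, Complex.conj_I, Complex.conj_ofReal]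
  push_cast
  ring

lemma eF_conj' (t x : EuclideanSpace ℝ (Fin ν)) :
    (starRingEnd ℂ) (eF t x) =
      Complex.exp (-((((2 : ℝ) * Real.pi * ⟪t, x⟫ : ℝ) : ℂ) * Complex.I)) := by
  rw [eF, ← Complex.exp_conj]
  congr 1
  rw [map_mul, Complex.conj_I, Complex.conj_ofReal]
  ring

lemma eF_conj_mul (t s x : EuclideanSpace ℝ (Fin ν)) :
    (starRingEnd ℂ) (eF t x) * eF s x = eF (s - t) x := by
  rw [eF_conj, eF_mul]
  congr 1
  abel

lemma eF_memℒp (μ : Measure (EuclideanSpace ℝ (Fin ν))) [IsProbabilityMeasure μ]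
    (t : EuclideanSpace ℝ (Fin ν)) : MemLp (eF t) 2 μ :=
  MemLp.of_bound ((eF_continuous t).aestronglyMeasurable) 1
    (Filter.Eventually.of_forall fun x => (eF_norm t x).le)

lemma muHat_eq (μ : Measure (EuclideanSpace ℝ (Fin ν))) (t : EuclideanSpace ℝ (Fin ν)) :
    muHat μ t = ∫ x, eF t x ∂μ := rfl

lemma muHat_zero (μ : Measure (EuclideanSpace ℝ (Fin ν))) [IsProbabilityMeasure μ] :
    muHat μ 0 = 1 := by
  rw [muHat_eq]
  have h : ∀ x : EuclideanSpace ℝ (Fin ν), eF (0 : EuclideanSpace ℝ (Fin ν)) x = 1 := eF_zero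
  simp only [h, integral_const, measure_univ, ENNReal.toReal_one, probReal_univ, one_smul]

section Lp

variable (μ : Measure (EuclideanSpace ℝ (Fin ν))) [IsProbabilityMeasure μ]

noncomputable def eL (t : EuclideanSpace ℝ (Fin ν)) : Lp ℂ 2 μ :=
  (eF_memℒp μ t).toLp (eF t)

lemma eL_coeFn (t : EuclideanSpace ℝ (Fin ν)) : (eL μ t : _ → ℂ) =ᵐ[μ] eF t :=
  MemLp.coeFn_toLp _

lemma inner_eL (t : EuclideanSpace ℝ (Fin ν)) (f : Lp ℂ 2 μ) :
    (inner ℂ (eL μ t) f : ℂ) = ∫ x, (starRingEnd ℂ) (eF t x) * f x ∂μ := by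
  rw [L2.inner_def]
  apply integral_congr_ae
  filter_upwards [eL_coeFn μ t] with x hx
  rw [RCLike.inner_apply, hx, mul_comm]

lemma inner_eL_eL (t s : EuclideanSpace ℝ (Fin ν)) :
    (inner ℂ (eL μ t) (eL μ s) : ℂ) = muHat μ (s - t) := by
  rw [inner_eL]
  have h : ∀ᵐ x ∂μ, (starRingEnd ℂ) (eF t x) * (eL μ s : _ → ℂ) x = eF (s - t) x := by
    filter_upwards [eL_coeFn μ s] with x hx
    rw [hx, eF_conj_mul]
  rw [integral_congr_ae h, muHat_eq]

lemma norm_eL (t : EuclideanSpace ℝ (Fin ν)) : ‖eL μ t‖ = 1 := by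
  have h : ‖eL μ t‖ ^ 2 = 1 := by
    rw [← inner_self_eq_norm_sq (𝕜 := ℂ), inner_eL_eL, sub_self, muHat_zero]
    simp
  nlinarith [norm_nonneg (eL μ t)]

end Lp

section Hilbert

variable {E : Type*} [NormedAddCommGroup E] [InnerProductSpace ℂ E] [CompleteSpace E]
variable {ι : Type*} {v : ι → E}

lemma re_conj_mul (z : ℂ) : Complex.re ((starRingEnd ℂ) z * z) = ‖z‖ ^ 2 := by
  rw [mul_comm, Complex.mul_conj]
  simp [Complex.normSq_eq_norm_sq, ← Complex.ofReal_pow]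

lemma parseval_of_dense (hv : Orthonormal ℂ v)
    (hsp : ⊤ ≤ (Submodule.span ℂ (Set.range v)).topologicalClosure) (x : E) :
    HasSum (fun i => ‖(inner ℂ (v i) x : ℂ)‖ ^ 2) (‖x‖ ^ 2) := by
  classical
  let b := HilbertBasis.mk hv hsp
  have hb : ⇑b = v := HilbertBasis.coe_mk _ _
  have h1 := b.hasSum_inner_mul_inner x x
  rw [hb] at h1
  have h2 := h1.mapL Complex.reCLM
  have hfun : (fun i => Complex.reCLM ((inner ℂ x (v i) : ℂ) * inner ℂ (v i) x)) =
      fun i => ‖(inner ℂ (v i) x : ℂ)‖ ^ 2 := by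
    funext i
    have hc : (inner ℂ x (v i) : ℂ) = (starRingEnd ℂ) (inner ℂ (v i) x) :=
      (inner_conj_symm _ _).symm
    rw [Complex.reCLM_apply, hc]
    exact re_conj_mul _
  have h4 : Complex.reCLM (inner ℂ x x : ℂ) = ‖x‖ ^ 2 := by
    rw [Complex.reCLM_apply, ← RCLike.re_to_complex]
    exact inner_self_eq_norm_sq x
  rw [hfun, h4] at h2
  exact h2

lemma mem_closure_span_of_parseval (hv : Orthonormal ℂ v) (x : E)
    (hx : ∑' i, ‖(inner ℂ (v i) x : ℂ)‖ ^ 2 = ‖x‖ ^ 2) :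
    x ∈ (Submodule.span ℂ (Set.range v)).topologicalClosure := by
  classical
  set S := (Submodule.span ℂ (Set.range v)).topologicalClosure with hS
  haveI : CompleteSpace S := (Submodule.isClosed_topologicalClosure _).completeSpace_coe
  have hvS : ∀ i, v i ∈ S :=
    fun i => Submodule.le_topologicalClosure _ (Submodule.subset_span ⟨i, rfl⟩)
  set w : ι → S := fun i => ⟨v i, hvS i⟩ with hw_def
  have hw : Orthonormal ℂ w := by
    rw [orthonormal_iff_ite] at hv ⊢
    intro i j
    rw [Submodule.coe_inner]
    exact hv i j
  have hwsp : ⊤ ≤ (Submodule.span ℂ (Set.range w)).topologicalClosure := by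
    rintro ⟨z, hz⟩ -
    rw [← SetLike.mem_coe, Submodule.topologicalClosure_coe]
    rw [show ((Submodule.span ℂ (Set.range w) : Set S)) =
      ((Submodule.span ℂ (Set.range w) : Submodule ℂ S) : Set S) from rfl]
    rw [show ((⟨z, hz⟩ : S) ∈ closure ((Submodule.span ℂ (Set.range w) : Submodule ℂ S) : Set S))
      ↔ _ from closure_subtype]
    have himg : (Subtype.val '' (Submodule.span ℂ (Set.range w) : Set S)) =
        (Submodule.span ℂ (Set.range v) : Set E) := by
      have hmap : (Submodule.span ℂ (Set.range w)).map S.subtype =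
          Submodule.span ℂ (Set.range v) := by
        rw [Submodule.map_span]
        congr 1
        ext y
        constructor
        · rintro ⟨_, ⟨i, rfl⟩, rfl⟩; exact ⟨i, rfl⟩
        · rintro ⟨i, rfl⟩; exact ⟨w i, ⟨i, rfl⟩, rfl⟩
      rw [← hmap]; rfl
    rw [himg]
    exact hz
  set y := Submodule.orthogonalProjection S x with hy_def
  have hinner_eq : ∀ i, (inner ℂ (v i) ((y : E)) : ℂ) = inner ℂ (v i) x := by
    intro i
    have h0 : (inner ℂ (v i) (x - (y : E)) : ℂ) = 0 := by
      have h := Submodule.sub_starProjection_mem_orthogonal (K := S) x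
      exact h (v i) (hvS i)
    rw [inner_sub_right] at h0
    linear_combination -h0
  have hy := parseval_of_dense hw hwsp y
  have hsum_eq : (∑' i, ‖(inner ℂ (w i) y : ℂ)‖ ^ 2) = ‖x‖ ^ 2 := by
    rw [← hx]
    congr 1
    ext i
    rw [Submodule.coe_inner, hinner_eq]
  have h5 : ‖y‖ ^ 2 = ‖x‖ ^ 2 := by
    rw [← hy.tsum_eq]; exact hsum_eq
  have hny : ‖(y : E)‖ ^ 2 = ‖x‖ ^ 2 := by
    rw [Submodule.norm_coe]; exact h5
  have hdecomp : ‖x‖ ^ 2 = ‖(y : E)‖ ^ 2 + ‖x - (y : E)‖ ^ 2 := by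
    have h0 : (inner ℂ ((y : E)) (x - (y : E)) : ℂ) = 0 := by
      have h := Submodule.sub_starProjection_mem_orthogonal (K := S) x
      exact h (y : E) y.2
    have hns := @norm_add_sq ℂ _ _ _ _ ((y : E)) (x - (y : E))
    rw [h0] at hns
    simpa using hns
  have hz : ‖x - (y : E)‖ ^ 2 = 0 := by rw [hny] at hdecomp; linarith
  have hxy : x = (y : E) := by
    have h := pow_eq_zero_iff (n := 2) (by norm_num) |>.mp hz
    rw [norm_eq_zero, sub_eq_zero] at h
    exact h
  rw [hxy]
  exact y.2

end Hilbert

section SW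

variable (K : Set (EuclideanSpace ℝ (Fin ν)))

/-- restriction of `eF t` to `K`. -/
noncomputable def rK (t : EuclideanSpace ℝ (Fin ν)) : C(K, ℂ) :=
  ⟨fun x => eF t x.val, (eF_continuous t).comp continuous_subtype_val⟩

noncomputable def expSpan : Submodule ℂ C(K, ℂ) := Submodule.span ℂ (Set.range (rK K))

lemma one_mem_expSpan : (1 : C(K, ℂ)) ∈ expSpan K := by
  have h : (1 : C(K, ℂ)) = rK K 0 := by
    ext x; simp [rK, eF_zero]
  rw [h]
  exact Submodule.subset_span ⟨0, rfl⟩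

lemma mul_mem_expSpan : ∀ a b : C(K, ℂ), a ∈ expSpan K → b ∈ expSpan K →
    a * b ∈ expSpan K := by
  have hgen : ∀ t, ∀ b ∈ expSpan K, rK K t * b ∈ expSpan K := by
    intro t b hb
    induction hb using Submodule.span_induction with
    | mem x hx =>
      obtain ⟨s, rfl⟩ := hx
      have h : rK K t * rK K s = rK K (t + s) := by
        ext x; exact eF_mul t s x.val
      rw [h]
      exact Submodule.subset_span ⟨t + s, rfl⟩
    | zero => rw [mul_zero]; exact zero_mem _
    | add x y hx hy ihx ihy => rw [mul_add]; exact add_mem ihx ihy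
    | smul c x hx ihx => rw [mul_smul_comm]; exact Submodule.smul_mem _ _ ihx
  intro a b ha hb
  induction ha using Submodule.span_induction with
  | mem x hx => obtain ⟨t, rfl⟩ := hx; exact hgen t b hb
  | zero => rw [zero_mul]; exact zero_mem _
  | add x y hx hy ihx ihy => rw [add_mul]; exact add_mem ihx ihy
  | smul c x hx ihx => rw [smul_mul_assoc]; exact Submodule.smul_mem _ _ ihx

lemma star_mem_expSpan : ∀ a : C(K, ℂ), a ∈ expSpan K → star a ∈ expSpan K := by
  intro a ha
  induction ha using Submodule.span_induction with
  | mem x hx =>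
    obtain ⟨t, rfl⟩ := hx
    have h : star (rK K t) = rK K (-t) := by
      ext x; exact eF_conj t x.val
    rw [h]
    exact Submodule.subset_span ⟨-t, rfl⟩
  | zero => rw [star_zero]; exact zero_mem _
  | add x y hx hy ihx ihy => rw [star_add]; exact add_mem ihx ihy
  | smul c x hx ihx =>
    rw [star_smul]
    exact Submodule.smul_mem _ _ ihx

noncomputable def expStarAlg : StarSubalgebra ℂ C(K, ℂ) where
  toSubalgebra := (expSpan K).toSubalgebra (one_mem_expSpan K) (mul_mem_expSpan K)
  star_mem' := star_mem_expSpan K _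

lemma eF_eq_iff {t x y : EuclideanSpace ℝ (Fin ν)} (h : eF t x = eF t y) :
    ∃ n : ℤ, ⟪t, x⟫ - ⟪t, y⟫ = n := by
  rw [eF, eF, Complex.exp_eq_exp_iff_exists_int] at h
  obtain ⟨n, hn⟩ := h
  refine ⟨n, ?_⟩
  have h2 : (((2 : ℝ) * Real.pi * ⟪t, x⟫ : ℝ) : ℂ) * Complex.I =
      (((2 : ℝ) * Real.pi * ⟪t, y⟫ + n * (2 * Real.pi) : ℝ) : ℂ) * Complex.I := by
    rw [hn]; push_cast; ring
  have h3 := mul_right_cancel₀ Complex.I_ne_zero h2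
  have h4 := Complex.ofReal_inj.mp h3
  have h5 : 2 * Real.pi * (⟪t, x⟫ - ⟪t, y⟫ - n) = 0 := by ring_nf; ring_nf at h4; linarith
  rcases mul_eq_zero.mp h5 with h | h
  · exact absurd h (by positivity)
  · linarith

lemma eF_sep {x y : EuclideanSpace ℝ (Fin ν)} (hxy : x ≠ y) :
    ∃ t, eF t x ≠ eF t y := by
  set d := x - y with hd
  have hd0 : d ≠ 0 := sub_ne_zero.mpr hxy
  have hnd : ‖d‖ ≠ 0 := norm_ne_zero_iff.mpr hd0
  refine ⟨((2 * ‖d‖ ^ 2)⁻¹ : ℝ) • d, fun h => ?_⟩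
  obtain ⟨n, hn⟩ := eF_eq_iff h
  rw [← inner_sub_right, ← hd, real_inner_smul_left, real_inner_self_eq_norm_sq] at hn
  rw [inv_mul_eq_div, div_eq_iff (by positivity)] at hn
  have hs : (0:ℝ) < ‖d‖ ^ 2 := by positivity
  have h2n : (2 * n : ℝ) = 1 := by nlinarith [hs]
  norm_cast at h2n
  omega

lemma expStarAlg_sep : (expStarAlg K).SeparatesPoints := by
  rintro ⟨x, hx⟩ ⟨y, hy⟩ hxy
  have hxy' : x ≠ y := fun h => hxy (Subtype.ext h)
  obtain ⟨t, ht⟩ := eF_sep hxy'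
  exact ⟨_, ⟨rK K t, Submodule.subset_span ⟨t, rfl⟩, rfl⟩, ht⟩

lemma exists_approx [CompactSpace K] (g : C(K, ℂ)) {ε : ℝ} (hε : 0 < ε) :
    ∃ a ∈ expSpan K, ∀ x : K, ‖g x - a x‖ ≤ ε := by
  have htop := ContinuousMap.starSubalgebra_topologicalClosure_eq_top_of_separatesPoints
    (expStarAlg K) (expStarAlg_sep K)
  have hg : g ∈ closure ((expStarAlg K) : Set C(K, ℂ)) := by
    have h : g ∈ ((expStarAlg K).topologicalClosure : Set C(K, ℂ)) := by
      rw [htop]; trivial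
    exact h
  obtain ⟨a, ha, hdist⟩ := Metric.mem_closure_iff.mp hg ε hε
  refine ⟨a, ha, fun x => ?_⟩
  have h := ContinuousMap.dist_apply_le_dist (f := g) (g := a) x
  rw [dist_eq_norm] at h
  exact h.trans hdist.le

end SW

section Dense

variable (μ : Measure (EuclideanSpace ℝ (Fin ν))) [IsProbabilityMeasure μ]
variable (K : Set (EuclideanSpace ℝ (Fin ν)))

lemma expSpan_to_eL :
    ∀ a ∈ expSpan K, ∃ F ∈ Submodule.span ℂ (Set.range (eL μ)),
      ∀ᵐ x ∂μ, ∀ hx : x ∈ K, (F : _ → ℂ) x = a ⟨x, hx⟩ := by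
  intro a ha
  induction ha using Submodule.span_induction with
  | mem b hb =>
    obtain ⟨t, rfl⟩ := hb
    refine ⟨eL μ t, Submodule.subset_span ⟨t, rfl⟩, ?_⟩
    filter_upwards [eL_coeFn μ t] with x hx
    intro hxK
    exact hx
  | zero =>
    refine ⟨0, zero_mem _, ?_⟩
    filter_upwards [Lp.coeFn_zero ℂ 2 μ] with x hx
    intro _
    simp only [ContinuousMap.zero_apply]; exact hx
  | add b c hb hc ihb ihc =>
    obtain ⟨F, hF, hFa⟩ := ihb
    obtain ⟨G, hG, hGa⟩ := ihc
    refine ⟨F + G, add_mem hF hG, ?_⟩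
    filter_upwards [Lp.coeFn_add F G, hFa, hGa] with x hx h1 h2
    intro hxK
    rw [hx]
    simp [h1 hxK, h2 hxK]
  | smul c b hb ihb =>
    obtain ⟨F, hF, hFa⟩ := ihb
    refine ⟨c • F, Submodule.smul_mem _ _ hF, ?_⟩
    filter_upwards [Lp.coeFn_smul c F, hFa] with x hx h1
    intro hxK
    rw [hx]
    simp [h1 hxK]

lemma span_eL_dense (hK : IsCompact K) (hKμ : μ Kᶜ = 0) :
    (Submodule.span ℂ (Set.range (eL μ))).topologicalClosure = ⊤ := by
  haveI : CompactSpace K := isCompact_iff_compactSpace.mp hK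
  have hae : ∀ᵐ x ∂μ, x ∈ K := by
    rw [MeasureTheory.ae_iff]
    exact hKμ
  rw [eq_top_iff]
  rintro f -
  rw [← SetLike.mem_coe, Submodule.topologicalClosure_coe, Metric.mem_closure_iff]
  intro ε hε
  have hdense := Lp.boundedContinuousFunction_dense (E := ℂ) (μ := μ) (p := 2)
    (by norm_num : (2 : ENNReal) ≠ ⊤)
  obtain ⟨G, hGmem, hdistG⟩ := Metric.mem_closure_iff.mp (hdense f) (ε/2) (by positivity)
  obtain ⟨g, hg⟩ := Lp.mem_boundedContinuousFunction_iff.mp hGmem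
  have hGg : (G : _ → ℂ) =ᵐ[μ] g := by
    have h := g.toContinuousMap.coeFn_toAEEqFun μ
    rw [hg] at h
    exact h
  set gK : C(K, ℂ) := ⟨fun x => g x.val, g.continuous.comp continuous_subtype_val⟩ with hgK
  obtain ⟨a, ha, hag⟩ := exists_approx K gK (show (0:ℝ) < ε/4 by positivity)
  obtain ⟨F, hF, hFa⟩ := expSpan_to_eL μ K a ha
  refine ⟨F, hF, ?_⟩
  have hb : ∀ᵐ x ∂μ, ‖(G - F : Lp ℂ 2 μ) x‖ ≤ ε/4 := by
    filter_upwards [Lp.coeFn_sub G F, hGg, hFa, hae] with x h0 h1 h2 h3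
    rw [h0, Pi.sub_apply, h1, h2 h3]
    exact hag ⟨x, h3⟩
  have hGF : dist G F ≤ ε/4 := by
    rw [dist_eq_norm]
    have h := Lp.norm_le_of_ae_bound (f := G - F) (by positivity : (0:ℝ) ≤ ε/4) hb
    simpa [measureUnivNNReal, measure_univ] using h
  calc dist f F ≤ dist f G + dist G F := dist_triangle f G F
  _ ≤ ε/2 + ε/4 := add_le_add hdistG.le hGF
  _ < ε := by linarith

end Dense

end QProof

open QProof in
/-- For a compactly supported probability measure `μ` on `ℝ^ν` and a set `P` of mutually
orthogonal frequencies, `{e_λ : λ ∈ P}` is an orthonormal basis of `L²(μ)` (i.e. total)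
iff `Q(t) = Σ_{λ∈P} |μ̂(t−λ)|² ≡ 1` on `ℝ^ν`. -/
theorem orthonormal_basis_iff_Q_eq_one {ν : ℕ}
    (μ : Measure (EuclideanSpace ℝ (Fin ν))) [IsProbabilityMeasure μ]
    (K : Set (EuclideanSpace ℝ (Fin ν))) (hK : IsCompact K) (hKμ : μ Kᶜ = 0)
    (P : Set (EuclideanSpace ℝ (Fin ν)))
    (horth : ∀ lam ∈ P, ∀ lam' ∈ P, lam ≠ lam' → muHat μ (lam' - lam) = 0) :
    (∀ f : EuclideanSpace ℝ (Fin ν) → ℂ, MemLp f 2 μ →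
      (∀ lam ∈ P,
        ∫ x, Complex.exp (-((((2 : ℝ) * Real.pi * ⟪lam, x⟫ : ℝ) : ℂ) * Complex.I)) * f x ∂μ = 0) →
      f =ᵐ[μ] 0)
    ↔ (∀ t : EuclideanSpace ℝ (Fin ν), ∑' lam : P, ‖muHat μ (t - (lam : _))‖ ^ 2 = 1) := by
  classical
  have hon : Orthonormal ℂ (fun lam : P => eL μ (lam : EuclideanSpace ℝ (Fin ν))) := by
    rw [orthonormal_iff_ite]
    intro i j
    show (inner ℂ (eL μ (i : EuclideanSpace ℝ (Fin ν))) (eL μ (j : EuclideanSpace ℝ (Fin ν))) : ℂ) = _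
    rw [inner_eL_eL]
    by_cases h : i = j
    · rw [if_pos h, h, sub_self, muHat_zero]
    · rw [if_neg h]
      exact horth i i.2 j j.2 (fun hc => h (Subtype.ext hc))
  set S0 := Submodule.span ℂ (Set.range (fun lam : P => eL μ (lam : EuclideanSpace ℝ (Fin ν))))
    with hS0
  have hiff1 : (∀ f : EuclideanSpace ℝ (Fin ν) → ℂ, MemLp f 2 μ →
      (∀ lam ∈ P,
        ∫ x, Complex.exp (-((((2 : ℝ) * Real.pi * ⟪lam, x⟫ : ℝ) : ℂ) * Complex.I)) * f x ∂μ = 0) →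
      f =ᵐ[μ] 0) ↔ S0ᗮ = ⊥ := by
    constructor
    · intro hL
      rw [Submodule.eq_bot_iff]
      intro F hFmem
      have hF0 : (F : _ → ℂ) =ᵐ[μ] 0 := by
        apply hL _ (Lp.memLp F)
        intro lam hlam
        have h1 : (inner ℂ (eL μ lam) F : ℂ) = 0 :=
          (Submodule.mem_orthogonal _ _).mp hFmem (eL μ lam)
            (Submodule.subset_span ⟨⟨lam, hlam⟩, rfl⟩)
        rw [inner_eL] at h1
        rw [← h1]
        apply integral_congr_ae
        refine Filter.Eventually.of_forall fun x => ?_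
        simp only [← eF_conj']
      exact Lp.eq_zero_iff_ae_eq_zero.mpr hF0
    · intro hbot f hf hint
      have hFmem : hf.toLp f ∈ S0ᗮ := by
        rw [Submodule.mem_orthogonal]
        intro u hu
        induction hu using Submodule.span_induction with
        | mem u hu =>
          obtain ⟨⟨lam, hlam⟩, rfl⟩ := hu
          show (inner ℂ (eL μ lam) (hf.toLp f) : ℂ) = 0
          rw [inner_eL, ← hint lam hlam]
          apply integral_congr_ae
          filter_upwards [hf.coeFn_toLp] with x hx
          simp only [hx, ← eF_conj']
        | zero => exact inner_zero_left _
        | add u w hu hw ihu ihw => rw [inner_add_left, ihu, ihw, add_zero]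
        | smul c u hu ihu => rw [inner_smul_left, ihu, mul_zero]
      have hF0 : hf.toLp f = 0 := by rw [hbot] at hFmem; simpa using hFmem
      calc f =ᵐ[μ] hf.toLp f := (hf.coeFn_toLp).symm
      _ =ᵐ[μ] 0 := by rw [hF0]; exact Lp.coeFn_zero ℂ 2 μ
  rw [hiff1]
  have hQt : ∀ t, (∑' lam : P, ‖muHat μ (t - (lam : EuclideanSpace ℝ (Fin ν)))‖ ^ 2) =
      ∑' lam : P, ‖(inner ℂ (eL μ (lam : EuclideanSpace ℝ (Fin ν))) (eL μ t) : ℂ)‖ ^ 2 := by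
    intro t
    congr 1
    funext lam
    rw [inner_eL_eL]
  constructor
  · intro hbot t
    have htop : S0.topologicalClosure = ⊤ := Submodule.topologicalClosure_eq_top_iff.mpr hbot
    have hp := parseval_of_dense hon (le_of_eq htop.symm) (eL μ t)
    rw [hQt t, hp.tsum_eq, norm_eL]
    norm_num
  · intro hQ
    rw [← Submodule.topologicalClosure_eq_top_iff, eq_top_iff, ← span_eL_dense μ K hK hKμ]
    refine Submodule.topologicalClosure_minimal _ (Submodule.span_le.mpr ?_)
      (Submodule.isClosed_topologicalClosure _)
    rintro _ ⟨t, rfl⟩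
    refine mem_closure_span_of_parseval hon (eL μ t) ?_
    rw [← hQt t, hQ t, norm_eL]
    norm_num
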